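/- Let P be a nonempty compact convex subset of ℝⁿ, f, g : ℝⁿ → ℝ convex and differentiable, F = f + g, with curvature-type constant C_F ≥ 0, i.e., F((1−α)x + αy) ≤ F(x) + α⟨∇F(x), y − x⟩ + (C_F/2)α² for all x, y ∈ P and α ∈ [0,1]. Let x⋆ ∈ P minimize F over P. Let (x_k) be generated by the generalized conditional gradient algorithm: x_0 ∈ P, and for each k, s_k minimizes u ↦ ⟨∇f(x_k), u⟩ + g(u) over P and x_{k+1} = x_k + α_k (s_k − x_k) with step α_k = 2/(k+2). Then for each k ≥ 1, F(x_k) − F(x⋆) ≤ 2C_F/(k+2). -/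

import Mathlib

open RealInnerProductSpace

lemma grad_lower {n : ℕ} {f : EuclideanSpace ℝ (Fin n) → ℝ}
    (hf : ConvexOn ℝ Set.univ f) (hd : Differentiable ℝ f)
    (x y : EuclideanSpace ℝ (Fin n)) :
    ⟪gradient f x, y - x⟫ ≤ f y - f x := by
  have hinner : ⟪gradient f x, y - x⟫ = fderiv ℝ f x (y - x) := by
    simp [gradient, InnerProductSpace.toDual_symm_apply]
  set φ : ℝ → ℝ := fun t => f (x + t • (y - x)) with hφ
  have hconv : ConvexOn ℝ Set.univ φ := by
    have := hf.comp_affineMap (AffineMap.lineMap x y)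
    simp only [Set.preimage_univ] at this
    convert this using 1
    case e'_12 =>
      funext t
      simp [hφ, AffineMap.lineMap_apply, add_comm]
    all_goals rfl
  have hderiv : HasDerivAt φ (fderiv ℝ f x (y - x)) 0 := by
    have hg : HasDerivAt (fun t : ℝ => x + t • (y - x)) (y - x) 0 := by
      simpa using ((hasDerivAt_id (0:ℝ)).smul_const (y - x)).const_add x
    have hfx : HasFDerivAt f (fderiv ℝ f x) (x + (0:ℝ) • (y - x)) := by
      simpa using (hd x).hasFDerivAt
    convert hfx.comp_hasDerivAt 0 hg using 1 <;> rfl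
  have := hconv.le_slope_of_hasDerivAt (Set.mem_univ 0) (Set.mem_univ 1) one_pos hderiv
  rw [hinner]
  simpa [hφ, slope_def_field] using this

/-- rate with fixed steps: the generalized conditional gradient iterates with
steps `α_k = 2/(k+2)` satisfy `F x_k - F x⋆ ≤ 2 C_F/(k+2)` for all `k ≥ 1`. -/
theorem stmt_12 (n : ℕ) (P : Set (EuclideanSpace ℝ (Fin n)))
    (hPne : P.Nonempty) (hPcpt : IsCompact P) (hPconv : Convex ℝ P)
    (f g : EuclideanSpace ℝ (Fin n) → ℝ)
    (hfconv : ConvexOn ℝ Set.univ f) (hgconv : ConvexOn ℝ Set.univ g)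
    (hfdiff : Differentiable ℝ f) (hgdiff : Differentiable ℝ g)
    (CF : ℝ) (hCF : 0 ≤ CF)
    (hcurv : ∀ x ∈ P, ∀ y ∈ P, ∀ α ∈ Set.Icc (0 : ℝ) 1,
      f ((1 - α) • x + α • y) + g ((1 - α) • x + α • y) ≤
        f x + g x + α * ⟪gradient (fun z => f z + g z) x, y - x⟫ + CF / 2 * α ^ 2)
    (xstar : EuclideanSpace ℝ (Fin n)) (hxstar : xstar ∈ P)
    (hmin : IsMinOn (fun x => f x + g x) P xstar)
    (x s : ℕ → EuclideanSpace ℝ (Fin n)) (hx0 : x 0 ∈ P)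
    (hsP : ∀ k, s k ∈ P)
    (hsmin : ∀ k, IsMinOn (fun u => ⟪gradient f (x k), u⟫ + g u) P (s k))
    (hstep : ∀ k : ℕ, x (k + 1) = x k + (2 / ((k : ℝ) + 2)) • (s k - x k)) :
    ∀ k : ℕ, 1 ≤ k →
      (f (x k) + g (x k)) - (f xstar + g xstar) ≤ 2 * CF / ((k : ℝ) + 2) := by
  -- basic facts about the step sizes
  have hα0 : ∀ k : ℕ, (0:ℝ) ≤ 2 / ((k : ℝ) + 2) := by
    intro k; positivity
  have hα1 : ∀ k : ℕ, 2 / ((k : ℝ) + 2) ≤ 1 := by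
    intro k
    rw [div_le_one (by positivity)]
    have : (0:ℝ) ≤ (k : ℝ) := Nat.cast_nonneg k
    linarith
  -- rewrite the step as a convex combination
  have hcomb : ∀ k : ℕ, x (k + 1) =
      (1 - 2 / ((k : ℝ) + 2)) • x k + (2 / ((k : ℝ) + 2)) • s k := by
    intro k
    rw [hstep k]
    module
  -- all iterates stay in P
  have hxP : ∀ k, x k ∈ P := by
    intro k
    induction k with
    | zero => exact hx0
    | succ k ih =>
      rw [hcomb k]
      exact hPconv ih (hsP k) (by linarith [hα1 k]) (hα0 k) (by ring)
  -- the gradient of F splits on inner products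
  have hgradF : ∀ z v : EuclideanSpace ℝ (Fin n),
      ⟪gradient (fun z => f z + g z) z, v⟫ = ⟪gradient f z, v⟫ + ⟪gradient g z, v⟫ := by
    intro z v
    have h1 : ⟪gradient (fun z => f z + g z) z, v⟫ = fderiv ℝ (fun z => f z + g z) z v := by
      simp [gradient, InnerProductSpace.toDual_symm_apply]
    have h2 : ⟪gradient f z, v⟫ = fderiv ℝ f z v := by
      simp [gradient, InnerProductSpace.toDual_symm_apply]
    have h3 : ⟪gradient g z, v⟫ = fderiv ℝ g z v := by
      simp [gradient, InnerProductSpace.toDual_symm_apply]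
    rw [h1, h2, h3, fderiv_fun_add (hfdiff z) (hgdiff z)]
    simp
  -- the key bound on the linearized decrease
  have hkey : ∀ k : ℕ, ⟪gradient (fun z => f z + g z) (x k), s k - x k⟫ ≤
      (f xstar + g xstar) - (f (x k) + g (x k)) := by
    intro k
    have hB : ⟪gradient g (x k), s k - x k⟫ ≤ g (s k) - g (x k) :=
      grad_lower hgconv hgdiff (x k) (s k)
    have hfstar : ⟪gradient f (x k), xstar - x k⟫ ≤ f xstar - f (x k) :=
      grad_lower hfconv hfdiff (x k) xstar
    have hs := hsmin k hxstar
    simp only [Set.mem_setOf_eq] at hs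
    have hsub1 : ⟪gradient f (x k), s k - x k⟫ =
        ⟪gradient f (x k), s k⟫ - ⟪gradient f (x k), x k⟫ := inner_sub_right _ _ _
    have hsub2 : ⟪gradient f (x k), xstar - x k⟫ =
        ⟪gradient f (x k), xstar⟫ - ⟪gradient f (x k), x k⟫ := inner_sub_right _ _ _
    rw [hgradF]
    linarith
  -- recursion on the optimality gap
  set h : ℕ → ℝ := fun k => (f (x k) + g (x k)) - (f xstar + g xstar) with hh
  have hrec : ∀ k : ℕ, h (k + 1) ≤
      (1 - 2 / ((k : ℝ) + 2)) * h k + CF / 2 * (2 / ((k : ℝ) + 2)) ^ 2 := by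
    intro k
    have hc := hcurv (x k) (hxP k) (s k) (hsP k) (2 / ((k : ℝ) + 2)) ⟨hα0 k, hα1 k⟩
    rw [← hcomb k] at hc
    have := hkey k
    have hαk := hα0 k
    simp only [hh]
    nlinarith [mul_le_mul_of_nonneg_left (hkey k) (hα0 k)]
  -- base case
  have hbase : h 1 ≤ 2 * CF / 3 := by
    have := hrec 0
    norm_num at this
    linarith
  -- induction
  intro k hk
  induction k with
  | zero => omega
  | succ k ih =>
    rcases Nat.eq_or_lt_of_le hk with h1 | h1
    · -- k + 1 = 1
      have : k = 0 := by omega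
      subst this
      simp only [hh] at hbase
      norm_num
      linarith
    · have hk1 : 1 ≤ k := by omega
      have IH := ih hk1
      have hrk := hrec k
      have hkpos : (0:ℝ) ≤ (k:ℝ) := Nat.cast_nonneg k
      have h2 : (1 - 2 / ((k : ℝ) + 2)) * h k ≤
          (1 - 2 / ((k : ℝ) + 2)) * (2 * CF / ((k : ℝ) + 2)) := by
        apply mul_le_mul_of_nonneg_left IH
        linarith [hα1 k]
      have hne : ((k:ℝ) + 2) ≠ 0 := by positivity
      have hfinal : (1 - 2 / ((k : ℝ) + 2)) * (2 * CF / ((k : ℝ) + 2)) +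
          CF / 2 * (2 / ((k : ℝ) + 2)) ^ 2 ≤ 2 * CF / ((k : ℝ) + 3) := by
        have key : (1 - 2 / ((k : ℝ) + 2)) * (2 * CF / ((k : ℝ) + 2)) +
            CF / 2 * (2 / ((k : ℝ) + 2)) ^ 2 = 2 * CF * ((k:ℝ) + 1) / ((k:ℝ) + 2) ^ 2 := by
          field_simp
          ring
        rw [key, div_le_div_iff₀ (by positivity) (by positivity)]
        nlinarith
      push_cast
      calc h (k + 1) ≤ (1 - 2 / ((k : ℝ) + 2)) * h k + CF / 2 * (2 / ((k : ℝ) + 2)) ^ 2 := hrk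
        _ ≤ (1 - 2 / ((k : ℝ) + 2)) * (2 * CF / ((k : ℝ) + 2)) + CF / 2 * (2 / ((k : ℝ) + 2)) ^ 2 := by linarith
        _ ≤ 2 * CF / ((k : ℝ) + 3) := hfinal
        _ = 2 * CF / ((k : ℝ) + 1 + 2) := by ring_nf
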